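/- Let n > 1 be a real number and W : ℝ → ℝ be continuously differentiable on [1,∞) with W'(1) = 0 and with W' differentiable at 1 (write W''(1) for its derivative there), and suppose λ ↦ W'(λ)/(λⁿ − 1) is integrable on (1,∞). Define P(c) = (1 + cⁿ)^{(n−1)/n} · ∫_{(1+cⁿ)^{1/n}}^{∞} W'(λ)/(λⁿ − 1) dλ for c > 0. If ∫₁^{∞} W'(λ)/(λⁿ − 1) dλ > W''(1)/(n(n−1)), then there exists δ > 0 such that for every c ∈ (0, δ), P is differentiable at c and its derivative is strictly positive (supercritical bifurcation). -/

import Mathlib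

open Real MeasureTheory Set Filter Topology

/-- Supercritical cavitation: if the critical dead load exceeds W''(1)/(n(n-1)),
then the dead-load function P(c) has strictly positive derivative for all
sufficiently small cavity radii c > 0. -/
theorem supercritical_cavitation (n : ℝ) (hn : 1 < n) (W : ℝ → ℝ) (W'' : ℝ)
    (hW : ContDiffOn ℝ 1 W (Ici 1))
    (hW1 : deriv W 1 = 0)
    (hW2 : HasDerivAt (deriv W) W'' 1)
    (hInt : IntegrableOn (fun l => deriv W l / (l ^ n - 1)) (Ioi 1))
    (P : ℝ → ℝ)
    (hP : ∀ c : ℝ, 0 < c → P c = (1 + c ^ n) ^ ((n - 1) / n) *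
      ∫ l in Ioi ((1 + c ^ n) ^ (1 / n)), deriv W l / (l ^ n - 1))
    (hcrit : W'' / (n * (n - 1)) < ∫ l in Ioi (1 : ℝ), deriv W l / (l ^ n - 1)) :
    ∃ δ > 0, ∀ c ∈ Ioo (0 : ℝ) δ, ∃ p, HasDerivAt P p c ∧ 0 < p := by
  have hn0 : (0:ℝ) < n := lt_trans one_pos hn
  set g : ℝ → ℝ := fun l => deriv W l / (l ^ n - 1) with hg_def
  set F1 : ℝ := ∫ l in Ioi (1:ℝ), g l with hF1_def
  -- continuity of g on Ioi 1
  have hpow_ne : ∀ x : ℝ, 1 < x → x ^ n - 1 ≠ 0 := by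
    intro x hx
    have h1 : (1:ℝ) < x ^ n :=
      (Real.one_lt_rpow_iff_of_pos (lt_trans one_pos hx)).mpr (Or.inl ⟨hx, hn0⟩)
    linarith
  have hderivW_cont : ContinuousOn (deriv W) (Ioi 1) :=
    (hW.mono (Ioi_subset_Ici le_rfl)).continuousOn_deriv_of_isOpen isOpen_Ioi le_rfl
  have hg_cont : ContinuousOn g (Ioi 1) := by
    apply hderivW_cont.div
    · exact (continuousOn_id.rpow_const (fun x hx => Or.inr hn0.le)).sub continuousOn_const
    · exact fun x hx => hpow_ne x hx
  set G : ℝ → ℝ := fun x => F1 - ∫ t in (1:ℝ)..x, g t with hG_def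
  -- identity for the tail integral
  have hIoi : ∀ x : ℝ, 1 < x → (∫ l in Ioi x, g l) = G x := by
    intro x hx
    have hsplit : Ioc 1 x ∪ Ioi x = Ioi 1 := Ioc_union_Ioi_eq_Ioi hx.le
    have h1 : IntegrableOn g (Ioc 1 x) := hInt.mono_set Ioc_subset_Ioi_self
    have h2 : IntegrableOn g (Ioi x) := hInt.mono_set (Ioi_subset_Ioi hx.le)
    have hu := setIntegral_union (Ioc_disjoint_Ioi le_rfl) measurableSet_Ioi h1 h2 (f := g)
    rw [hsplit] at hu
    simp only [hG_def]
    rw [intervalIntegral.integral_of_le hx.le, hF1_def, hu]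
    ring
  -- FTC: derivative of G
  have hG_deriv : ∀ x : ℝ, 1 < x → HasDerivAt G (-(g x)) x := by
    intro x hx
    have hii : IntervalIntegrable g volume 1 x :=
      (intervalIntegrable_iff_integrableOn_Ioc_of_le hx.le).mpr
        (hInt.mono_set Ioc_subset_Ioi_self)
    have hmeas : StronglyMeasurableAtFilter g (𝓝 x) :=
      ⟨Ioi 1, Ioi_mem_nhds hx, hInt.aestronglyMeasurable⟩
    have hca : ContinuousAt g x := hg_cont.continuousAt (Ioi_mem_nhds hx)
    exact (intervalIntegral.integral_hasDerivAt_right hii hmeas hca).const_sub F1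
  -- tendsto of g at 1⁺
  have hmono_ne : 𝓝[>] (1:ℝ) ≤ 𝓝[≠] (1:ℝ) :=
    nhdsWithin_mono _ (fun x hx => ne_of_gt hx)
  have hslope1 : Tendsto (slope (deriv W) 1) (𝓝[>] (1:ℝ)) (𝓝 W'') :=
    (hasDerivAt_iff_tendsto_slope.mp hW2).mono_left hmono_ne
  have hpow1 : HasDerivAt (fun x : ℝ => x ^ n) n 1 := by
    have := Real.hasDerivAt_rpow_const (x := (1:ℝ)) (p := n) (Or.inl one_ne_zero)
    simpa using this
  have hslope2 : Tendsto (slope (fun x : ℝ => x ^ n) 1) (𝓝[>] (1:ℝ)) (𝓝 n) :=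
    (hasDerivAt_iff_tendsto_slope.mp hpow1).mono_left hmono_ne
  have hg_tendsto : Tendsto g (𝓝[>] (1:ℝ)) (𝓝 (W'' / n)) := by
    have h := hslope1.div hslope2 (ne_of_gt hn0)
    refine Tendsto.congr' ?_ h
    filter_upwards [self_mem_nhdsWithin] with x hx
    have hx1 : (1:ℝ) < x := hx
    have hxne : x - 1 ≠ 0 := sub_ne_zero.mpr (ne_of_gt hx1)
    have hpne : x ^ n - 1 ≠ 0 := hpow_ne x hx1
    have hkey : slope (deriv W) 1 x / slope (fun x : ℝ => x ^ n) 1 x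
        = deriv W x / (x ^ n - 1) := by
      rw [slope_def_field, slope_def_field, hW1, Real.one_rpow, sub_zero]
      field_simp
    simpa [hg_def] using hkey
  -- tendsto of the primitive at 1⁺
  have hprim : Tendsto (fun x => ∫ t in (1:ℝ)..x, g t) (𝓝[>] (1:ℝ)) (𝓝 0) := by
    have hicc : IntegrableOn g (Icc 1 2) :=
      (integrableOn_Icc_iff_integrableOn_Ioc).mpr (hInt.mono_set Ioc_subset_Ioi_self)
    have hc := (intervalIntegral.continuousOn_primitive hicc) 1 (left_mem_Icc.mpr one_le_two)
    have hmono : 𝓝[>] (1:ℝ) ≤ 𝓝[Icc 1 2] (1:ℝ) := by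
      rw [← nhdsWithin_Ioo_eq_nhdsGT (one_lt_two)]
      exact nhdsWithin_mono _ Ioo_subset_Icc_self
    have ht := hc.tendsto.mono_left hmono
    simp only [Set.Ioc_self, Measure.restrict_empty, integral_zero_measure] at ht
    refine Tendsto.congr' ?_ ht
    filter_upwards [self_mem_nhdsWithin] with x hx
    rw [intervalIntegral.integral_of_le (le_of_lt hx)]
  have hG_tendsto : Tendsto G (𝓝[>] (1:ℝ)) (𝓝 F1) := by
    have := hprim.const_sub F1
    simpa [hG_def] using this
  -- limit of the bracket
  have hφ : Tendsto (fun x => (n-1) * G x - x * g x) (𝓝[>] (1:ℝ))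
      (𝓝 ((n-1) * F1 - W'' / n)) := by
    have h1 := hG_tendsto.const_mul (n-1)
    have h2 : Tendsto (fun x : ℝ => x * g x) (𝓝[>] (1:ℝ)) (𝓝 (1 * (W''/n))) :=
      (tendsto_id.mono_left nhdsWithin_le_nhds).mul hg_tendsto
    simpa using h1.sub h2
  have hL : 0 < (n-1) * F1 - W'' / n := by
    have hnn : (0:ℝ) < n * (n-1) := by nlinarith
    have h := (div_lt_iff₀ hnn).mp hcrit
    rw [sub_pos, div_lt_iff₀ hn0]
    nlinarith
  have hev : ∀ᶠ x in 𝓝[>] (1:ℝ), 0 < (n-1) * G x - x * g x :=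
    hφ.eventually (eventually_gt_nhds hL)
  -- the map s and its properties
  have hs_gt : ∀ c : ℝ, 0 < c → 1 < (1 + c ^ n) ^ (1/n) := by
    intro c hc
    have hcn : 0 < c ^ n := Real.rpow_pos_of_pos hc n
    exact (Real.one_lt_rpow_iff_of_pos (by linarith)).mpr
      (Or.inl ⟨by linarith, by positivity⟩)
  have hs_tendsto : Tendsto (fun c : ℝ => (1 + c ^ n) ^ (1/n)) (𝓝[>] (0:ℝ))
      (𝓝[>] (1:ℝ)) := by
    rw [tendsto_nhdsWithin_iff]
    constructor
    · have h1 : ContinuousAt (fun c : ℝ => c ^ n) 0 :=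
        Real.continuousAt_rpow_const 0 n (Or.inr hn0.le)
      have hcont1 : ContinuousAt (fun c : ℝ => 1 + c ^ n) 0 := continuousAt_const.add h1
      have t1 : Tendsto (fun c : ℝ => 1 + c ^ n) (𝓝 0) (𝓝 1) := by
        simpa [Real.zero_rpow (ne_of_gt hn0)] using hcont1.tendsto
      have t2 : Tendsto (fun y : ℝ => y ^ (1/n)) (𝓝 (1:ℝ)) (𝓝 1) := by
        have h3' : ContinuousAt (fun y : ℝ => y ^ (1/n)) 1 :=
          Real.continuousAt_rpow_const 1 (1/n) (Or.inl one_ne_zero)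
        simpa using h3'.tendsto
      exact (t2.comp t1).mono_left nhdsWithin_le_nhds
    · filter_upwards [self_mem_nhdsWithin] with c hc
      exact hs_gt c hc
  have hev2 : ∀ᶠ c in 𝓝[>] (0:ℝ),
      0 < (n-1) * G ((1 + c ^ n) ^ (1/n)) - (1 + c ^ n) ^ (1/n) * g ((1 + c ^ n) ^ (1/n)) :=
    hs_tendsto.eventually hev
  obtain ⟨δ, hδpos, hδ⟩ := (nhdsGT_basis (0:ℝ)).eventually_iff.mp hev2
  refine ⟨δ, hδpos, fun c hc => ?_⟩
  have hc0 : (0:ℝ) < c := hc.1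
  set sc : ℝ := (1 + c ^ n) ^ (1/n) with hsc_def
  have hsc1 : 1 < sc := hs_gt c hc0
  have hsc0 : 0 < sc := lt_trans one_pos hsc1
  have hupos : (0:ℝ) < 1 + c ^ n := by
    have := Real.rpow_pos_of_pos hc0 n; linarith
  -- derivative chain
  have hcn : HasDerivAt (fun x : ℝ => x ^ n) (n * c ^ (n-1)) c :=
    Real.hasDerivAt_rpow_const (Or.inl (ne_of_gt hc0))
  have hu : HasDerivAt (fun x : ℝ => 1 + x ^ n) (n * c ^ (n-1)) c := hcn.const_add 1
  have hs : HasDerivAt (fun x : ℝ => (1 + x ^ n) ^ (1/n))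
      (n * c ^ (n-1) * (1/n) * (1 + c ^ n) ^ (1/n - 1)) c :=
    hu.rpow_const (Or.inl (ne_of_gt hupos))
  set s' : ℝ := n * c ^ (n-1) * (1/n) * (1 + c ^ n) ^ (1/n - 1) with hs'_def
  have hf1 : HasDerivAt (fun x : ℝ => ((1 + x ^ n) ^ (1/n)) ^ (n-1))
      (s' * (n-1) * sc ^ (n-1-1)) c := hs.rpow_const (Or.inl (ne_of_gt hsc0))
  have hf2 : HasDerivAt (fun x : ℝ => G ((1 + x ^ n) ^ (1/n))) (-(g sc) * s') c :=
    HasDerivAt.comp (h₂ := G) c (hG_deriv sc hsc1) hs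
  have hmul := hf1.mul hf2
  have hPQ : P =ᶠ[𝓝 c] fun x => ((1 + x ^ n) ^ (1/n)) ^ (n-1) * G ((1 + x ^ n) ^ (1/n)) := by
    filter_upwards [Ioi_mem_nhds hc0] with x hx
    rw [hP x hx, hIoi _ (hs_gt x hx)]
    congr 1
    have hxpos : (0:ℝ) ≤ 1 + x ^ n := by
      have := Real.rpow_pos_of_pos hx n; linarith
    rw [← Real.rpow_mul hxpos, one_div_mul_eq_div]
  have hder : HasDerivAt P
      (s' * (n-1) * sc ^ (n-1-1) * G sc + sc ^ (n-1) * (-(g sc) * s')) c :=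
    hmul.congr_of_eventuallyEq hPQ
  refine ⟨_, hder, ?_⟩
  -- positivity
  have hkey : 0 < (n-1) * G sc - sc * g sc := hδ hc
  have hs'pos : 0 < s' := by
    rw [hs'_def]
    have h1 : 0 < c ^ (n-1) := Real.rpow_pos_of_pos hc0 _
    have h2 : 0 < (1 + c ^ n) ^ (1/n - 1) := Real.rpow_pos_of_pos hupos _
    have h3 : (0:ℝ) < 1/n := by positivity
    exact mul_pos (mul_pos (mul_pos hn0 h1) h3) h2
  have hsc2 : 0 < sc ^ (n-2) := Real.rpow_pos_of_pos hsc0 _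
  have e1 : n - 1 - 1 = n - 2 := by ring
  have e2 : sc ^ (n-1) = sc ^ (n-2) * sc := by
    rw [show n - 1 = (n-2) + 1 by ring, Real.rpow_add_one (ne_of_gt hsc0)]
  have : s' * (n-1) * sc ^ (n-1-1) * G sc + sc ^ (n-1) * (-(g sc) * s')
      = s' * (sc ^ (n-2) * ((n-1) * G sc - sc * g sc)) := by
    rw [e1, e2]; ring
  rw [this]
  exact mul_pos hs'pos (mul_pos hsc2 hkey)
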